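/- For all real parameters α and β, the polynomial F̃₂(x,t;α,β) = x⁶ + (3t² + 25/3)x⁴ + (3t⁴ + 30t² − 125/9)x² + t⁶ + (17/3)t⁴ + (475/9)t² + 625/9 + 2αt(3x² − t² + 5/3) + 2βx(x² − 3t² − 1/3) + α² + β² satisfies, as a function of (x,t) ∈ ℝ², the bilinear Boussinesq equation F·F_tt − (F_t)² + F·F_xx − (F_x)² − (1/3)(F·F_xxxx − 4·F_x·F_xxx + 3·(F_xx)²) = 0. -/

import Mathlib

/-- Partial derivative in the first (space) variable. -/
noncomputable def dX (f : ℝ → ℝ → ℝ) : ℝ → ℝ → ℝ := fun x t => deriv (fun x' => f x' t) x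

/-- Partial derivative in the second (time) variable. -/
noncomputable def dT (f : ℝ → ℝ → ℝ) : ℝ → ℝ → ℝ := fun x t => deriv (fun t' => f x t') t

/-- The bilinear Boussinesq equation
`F·F_tt − (F_t)² + F·F_xx − (F_x)² − (1/3)(F·F_xxxx − 4 F_x F_xxx + 3 (F_xx)²) = 0`. -/
def IsBilinearBQSolution (F : ℝ → ℝ → ℝ) : Prop :=
  ∀ x t : ℝ,
    F x t * dT (dT F) x t - (dT F x t) ^ 2 + F x t * dX (dX F) x t - (dX F x t) ^ 2
      - (1 / 3) * (F x t * dX (dX (dX (dX F))) x t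
          - 4 * dX F x t * dX (dX (dX F)) x t + 3 * (dX (dX F) x t) ^ 2) = 0

/-- The polynomial `F₂(x,t)`. -/
noncomputable def F2 (x t : ℝ) : ℝ :=
  x ^ 6 + (3 * t ^ 2 + 25 / 3) * x ^ 4 + (3 * t ^ 4 + 30 * t ^ 2 - 125 / 9) * x ^ 2
    + t ^ 6 + (17 / 3) * t ^ 4 + (475 / 9) * t ^ 2 + 625 / 9

/-- `P₁(x,t) = 3x² − t² + 5/3`. -/
noncomputable def P1 (x t : ℝ) : ℝ := 3 * x ^ 2 - t ^ 2 + 5 / 3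

/-- `Q₁(x,t) = x² − 3t² − 1/3`. -/
noncomputable def Q1 (x t : ℝ) : ℝ := x ^ 2 - 3 * t ^ 2 - 1 / 3

lemma hasDerivAt_poly6 (a b c d e f g x : ℝ) :
    HasDerivAt (fun y : ℝ => a*y^6+b*y^5+c*y^4+d*y^3+e*y^2+f*y+g)
      (6*a*x^5+5*b*x^4+4*c*x^3+3*d*x^2+2*e*x+f) x := by
  have h := ((((((((hasDerivAt_pow 6 x).const_mul a).add
      ((hasDerivAt_pow 5 x).const_mul b)).add
      ((hasDerivAt_pow 4 x).const_mul c)).add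
      ((hasDerivAt_pow 3 x).const_mul d)).add
      ((hasDerivAt_pow 2 x).const_mul e)).add
      ((hasDerivAt_id x).const_mul f)).add_const g)
  refine h.congr_deriv ?_
  push_cast
  ring

lemma deriv_poly6 (a b c d e f g x : ℝ) :
    deriv (fun y : ℝ => a*y^6+b*y^5+c*y^4+d*y^3+e*y^2+f*y+g) x
      = 6*a*x^5+5*b*x^4+4*c*x^3+3*d*x^2+2*e*x+f :=
  (hasDerivAt_poly6 a b c d e f g x).deriv

section derivs
variable (α β : ℝ)

private lemma hx1 :
    dX (fun x t => F2 x t + 2 * α * t * P1 x t + 2 * β * x * Q1 x t + α ^ 2 + β ^ 2)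
      = fun x t => 6*x^5 + (12*t^2 + 100/3)*x^3 + 6*β*x^2
          + (6*t^4 + 60*t^2 - 250/9 + 12*α*t)*x - 6*β*t^2 - (2/3)*β := by
  funext x t
  show deriv (fun x' => F2 x' t + 2 * α * t * P1 x' t + 2 * β * x' * Q1 x' t + α ^ 2 + β ^ 2) x = _
  have h : (fun x' => F2 x' t + 2 * α * t * P1 x' t + 2 * β * x' * Q1 x' t + α ^ 2 + β ^ 2)
      = fun y : ℝ => 1*y^6+0*y^5+(3*t^2+25/3)*y^4+(2*β)*y^3
          +(3*t^4+30*t^2-125/9+6*α*t)*y^2+(-6*β*t^2-(2/3)*β)*y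
          +(t^6+(17/3)*t^4+(475/9)*t^2+625/9-2*α*t^3+(10/3)*α*t+α^2+β^2) := by
    funext y; simp only [F2, P1, Q1]; ring
  rw [h, deriv_poly6]; ring

private lemma hx2 :
    dX (fun x t => 6*x^5 + (12*t^2 + 100/3)*x^3 + 6*β*x^2
          + (6*t^4 + 60*t^2 - 250/9 + 12*α*t)*x - 6*β*t^2 - (2/3)*β)
      = fun x t => 30*x^4 + (36*t^2 + 100)*x^2 + 12*β*x
          + 6*t^4 + 60*t^2 - 250/9 + 12*α*t := by
  funext x t
  show deriv (fun x' => 6*x'^5 + (12*t^2 + 100/3)*x'^3 + 6*β*x'^2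
      + (6*t^4 + 60*t^2 - 250/9 + 12*α*t)*x' - 6*β*t^2 - (2/3)*β) x = _
  have h : (fun x' => 6*x'^5 + (12*t^2 + 100/3)*x'^3 + 6*β*x'^2
      + (6*t^4 + 60*t^2 - 250/9 + 12*α*t)*x' - 6*β*t^2 - (2/3)*β)
      = fun y : ℝ => 0*y^6+6*y^5+0*y^4+(12*t^2+100/3)*y^3+(6*β)*y^2
          +(6*t^4+60*t^2-250/9+12*α*t)*y+(-6*β*t^2-(2/3)*β) := by
    funext y; ring
  rw [h, deriv_poly6]; ring

private lemma hx3 :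
    dX (fun x t => 30*x^4 + (36*t^2 + 100)*x^2 + 12*β*x
          + 6*t^4 + 60*t^2 - 250/9 + 12*α*t)
      = fun x t => 120*x^3 + (72*t^2 + 200)*x + 12*β := by
  funext x t
  show deriv (fun x' => 30*x'^4 + (36*t^2 + 100)*x'^2 + 12*β*x'
      + 6*t^4 + 60*t^2 - 250/9 + 12*α*t) x = _
  have h : (fun x' => 30*x'^4 + (36*t^2 + 100)*x'^2 + 12*β*x'
      + 6*t^4 + 60*t^2 - 250/9 + 12*α*t)
      = fun y : ℝ => 0*y^6+0*y^5+30*y^4+0*y^3+(36*t^2+100)*y^2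
          +(12*β)*y+(6*t^4+60*t^2-250/9+12*α*t) := by
    funext y; ring
  rw [h, deriv_poly6]; ring

private lemma hx4 :
    dX (fun x t : ℝ => 120*x^3 + (72*t^2 + 200)*x + 12*β)
      = fun x t : ℝ => 360*x^2 + 72*t^2 + 200 := by
  funext x t
  show deriv (fun x' => 120*x'^3 + (72*t^2 + 200)*x' + 12*β) x = _
  have h : (fun x' : ℝ => 120*x'^3 + (72*t^2 + 200)*x' + 12*β)
      = fun y : ℝ => 0*y^6+0*y^5+0*y^4+120*y^3+0*y^2+(72*t^2+200)*y+(12*β) := by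
    funext y; ring
  rw [h, deriv_poly6]; ring

private lemma ht1 :
    dT (fun x t => F2 x t + 2 * α * t * P1 x t + 2 * β * x * Q1 x t + α ^ 2 + β ^ 2)
      = fun x t => 6*t^5 + (12*x^2 + 68/3)*t^3 - 6*α*t^2
          + (6*x^4 + 60*x^2 + 950/9 - 12*β*x)*t + 6*α*x^2 + (10/3)*α := by
  funext x t
  show deriv (fun t' => F2 x t' + 2 * α * t' * P1 x t' + 2 * β * x * Q1 x t' + α ^ 2 + β ^ 2) t = _
  have h : (fun t' => F2 x t' + 2 * α * t' * P1 x t' + 2 * β * x * Q1 x t' + α ^ 2 + β ^ 2)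
      = fun y : ℝ => 1*y^6+0*y^5+(3*x^2+17/3)*y^4+(-2*α)*y^3
          +(3*x^4+30*x^2+475/9-6*β*x)*y^2+(6*α*x^2+(10/3)*α)*y
          +(x^6+(25/3)*x^4-(125/9)*x^2+625/9+2*β*x^3-(2/3)*β*x+α^2+β^2) := by
    funext y; simp only [F2, P1, Q1]; ring
  rw [h, deriv_poly6]; ring

private lemma ht2 :
    dT (fun x t => 6*t^5 + (12*x^2 + 68/3)*t^3 - 6*α*t^2
          + (6*x^4 + 60*x^2 + 950/9 - 12*β*x)*t + 6*α*x^2 + (10/3)*α)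
      = fun x t => 30*t^4 + (36*x^2 + 68)*t^2 - 12*α*t
          + 6*x^4 + 60*x^2 + 950/9 - 12*β*x := by
  funext x t
  show deriv (fun t' => 6*t'^5 + (12*x^2 + 68/3)*t'^3 - 6*α*t'^2
      + (6*x^4 + 60*x^2 + 950/9 - 12*β*x)*t' + 6*α*x^2 + (10/3)*α) t = _
  have h : (fun t' => 6*t'^5 + (12*x^2 + 68/3)*t'^3 - 6*α*t'^2
      + (6*x^4 + 60*x^2 + 950/9 - 12*β*x)*t' + 6*α*x^2 + (10/3)*α)
      = fun y : ℝ => 0*y^6+6*y^5+0*y^4+(12*x^2+68/3)*y^3+(-6*α)*y^2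
          +(6*x^4+60*x^2+950/9-12*β*x)*y+(6*α*x^2+(10/3)*α) := by
    funext y; ring
  rw [h, deriv_poly6]; ring

end derivs

theorem bilinear_F2_tilde (α β : ℝ) :
    IsBilinearBQSolution
      (fun x t => F2 x t + 2 * α * t * P1 x t + 2 * β * x * Q1 x t + α ^ 2 + β ^ 2) := by
  intro x t
  rw [hx1, hx2, hx3, hx4, ht1, ht2]
  simp only [F2, P1, Q1]
  ring
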